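/- Slow decay of the stationary tail over one mixing window: under (HP1)–(HP3), for every ε > 0 there exists N such that for all n ≥ N and all t ∈ ℕ, ℙ_{π_n}(τ_{x_n} > t + T_n) ≥ (1 − ε) · ℙ_{π_n}(τ_{x_n} > t). -/
import Mathlib


open Finset Filter

/-- The kernel of the chain killed at `x`: all entries from or to `x` are set to zero.
For `y, z ≠ x` the powers of `killed P x` agree with the powers of the principal
submatrix `[P]_x` of `P` obtained by deleting the row and the column indexed by `x`. -/
def killed {n : ℕ} (P : Matrix (Fin n) (Fin n) ℝ) (x : Fin n) :
    Matrix (Fin n) (Fin n) ℝ :=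
  Matrix.of fun y z => if y = x ∨ z = x then 0 else P y z

/-- The no-hit probability `ℙ_α(τ_x > t) = Σ_{y ≠ x} Σ_{z ≠ x} α(y)·([P]_x)^t(y,z)`. -/
def noHit {n : ℕ} (P : Matrix (Fin n) (Fin n) ℝ) (x : Fin n)
    (a : Fin n → ℝ) (t : ℕ) : ℝ :=
  ∑ y ∈ Finset.univ.erase x, ∑ z ∈ Finset.univ.erase x, a y * ((killed P x) ^ t) y z

/-- The expected number of returns to `x` within time `T`:
`R_T(x) = Σ_{t=0}^{T} P^t(x,x)`. -/
def returns {n : ℕ} (P : Matrix (Fin n) (Fin n) ℝ) (x : Fin n) (T : ℕ) : ℝ :=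
  ∑ t ∈ Finset.range (T + 1), (P ^ t) x x

section Aux

variable {m : ℕ} {Q : Matrix (Fin m) (Fin m) ℝ} {x0 : Fin m} {p : Fin m → ℝ}

lemma killed_nonneg (hQ : ∀ y z, 0 ≤ Q y z) (y z : Fin m) :
    0 ≤ killed Q x0 y z := by
  simp only [killed, Matrix.of_apply]
  split
  · exact le_refl 0
  · exact hQ y z

lemma killed_le (hQ : ∀ y z, 0 ≤ Q y z) (y z : Fin m) :
    killed Q x0 y z ≤ Q y z := by
  simp only [killed, Matrix.of_apply]
  split
  · exact hQ y z
  · exact le_refl _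

lemma killed_col (w : Fin m) : killed Q x0 w x0 = 0 := by
  simp [killed]

lemma killed_eq (y z : Fin m) (hy : y ≠ x0) (hz : z ≠ x0) :
    killed Q x0 y z = Q y z := by
  simp [killed, hy, hz]

lemma pow_entry_nonneg (hQ : ∀ y z, 0 ≤ Q y z) (t : ℕ) (y z : Fin m) :
    0 ≤ (Q ^ t) y z := by
  induction t generalizing y z with
  | zero => rw [pow_zero]; by_cases h : y = z <;> simp [Matrix.one_apply, h]
  | succ t ih =>
    rw [pow_succ, Matrix.mul_apply]
    exact Finset.sum_nonneg fun w _ => mul_nonneg (ih y w) (hQ w z)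

lemma kpow_nonneg (hQ : ∀ y z, 0 ≤ Q y z) (t : ℕ) (y z : Fin m) :
    0 ≤ ((killed Q x0) ^ t) y z :=
  pow_entry_nonneg (killed_nonneg hQ) t y z

lemma kpow_le (hQ : ∀ y z, 0 ≤ Q y z) (t : ℕ) (y z : Fin m) :
    ((killed Q x0) ^ t) y z ≤ (Q ^ t) y z := by
  induction t generalizing y z with
  | zero => exact le_of_eq rfl
  | succ t ih =>
    rw [pow_succ, pow_succ, Matrix.mul_apply, Matrix.mul_apply]
    refine Finset.sum_le_sum fun w _ => ?_
    exact mul_le_mul (ih y w) (killed_le hQ w z) (killed_nonneg hQ w z)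
      (pow_entry_nonneg hQ t y w)

lemma pow_row (hQrow : ∀ y, ∑ z, Q y z = 1) (t : ℕ) (y : Fin m) :
    ∑ z, (Q ^ t) y z = 1 := by
  induction t generalizing y with
  | zero => simp [Matrix.one_apply]
  | succ t ih =>
    rw [pow_succ]
    simp only [Matrix.mul_apply]
    rw [Finset.sum_comm]
    calc ∑ w, ∑ z, (Q ^ t) y w * Q w z
        = ∑ w, (Q ^ t) y w * ∑ z, Q w z := by simp [Finset.mul_sum]
      _ = ∑ w, (Q ^ t) y w := by simp [hQrow]
      _ = 1 := ih y

lemma kpow_col (t : ℕ) (y : Fin m) (hy : y ≠ x0) :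
    ((killed Q x0) ^ t) y x0 = 0 := by
  cases t with
  | zero => simp [Matrix.one_apply, hy]
  | succ t =>
    rw [pow_succ, Matrix.mul_apply]
    exact Finset.sum_eq_zero fun w _ => by rw [killed_col, mul_zero]

lemma stat_pow (hstat : ∀ w, ∑ y, p y * Q y w = p w) (t : ℕ) (z : Fin m) :
    ∑ y, p y * (Q ^ t) y z = p z := by
  induction t generalizing z with
  | zero => simp [Matrix.one_apply, mul_ite]
  | succ t ih =>
    rw [pow_succ']
    simp only [Matrix.mul_apply, Finset.mul_sum]
    rw [Finset.sum_comm]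
    calc ∑ w, ∑ y, p y * (Q y w * (Q ^ t) w z)
        = ∑ w, (∑ y, p y * Q y w) * (Q ^ t) w z := by
          refine Finset.sum_congr rfl fun w _ => ?_
          rw [Finset.sum_mul]
          exact Finset.sum_congr rfl fun y _ => (mul_assoc _ _ _).symm
      _ = ∑ w, p w * (Q ^ t) w z := by
          refine Finset.sum_congr rfl fun w _ => ?_
          rw [hstat w]
      _ = p z := ih z

end Aux

noncomputable def nuA {m : ℕ} (Q : Matrix (Fin m) (Fin m) ℝ) (x0 : Fin m)
    (p : Fin m → ℝ) (t : ℕ) (z : Fin m) : ℝ :=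
  ∑ y ∈ Finset.univ.erase x0, p y * ((killed Q x0) ^ t) y z

section Aux2

variable {m : ℕ} {Q : Matrix (Fin m) (Fin m) ℝ} {x0 : Fin m} {p : Fin m → ℝ}

lemma noHit_eq_nu (t : ℕ) :
    noHit Q x0 p t = ∑ z ∈ Finset.univ.erase x0, nuA Q x0 p t z :=
  Finset.sum_comm

lemma nuA_nonneg (hQ : ∀ y z, 0 ≤ Q y z) (hp : ∀ y, 0 ≤ p y) (t : ℕ) (z : Fin m) :
    0 ≤ nuA Q x0 p t z :=
  Finset.sum_nonneg fun y _ => mul_nonneg (hp y) (kpow_nonneg hQ t y z)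

lemma nuA_le (hQ : ∀ y z, 0 ≤ Q y z) (hp : ∀ y, 0 ≤ p y)
    (hstat : ∀ w, ∑ y, p y * Q y w = p w) (t : ℕ) (z : Fin m) :
    nuA Q x0 p t z ≤ p z := by
  calc nuA Q x0 p t z ≤ ∑ y ∈ Finset.univ.erase x0, p y * (Q ^ t) y z :=
        Finset.sum_le_sum fun y _ =>
          mul_le_mul_of_nonneg_left (kpow_le hQ t y z) (hp y)
    _ ≤ ∑ y, p y * (Q ^ t) y z :=
        Finset.sum_le_sum_of_subset_of_nonneg (Finset.subset_univ _)
          (fun y _ _ => mul_nonneg (hp y) (pow_entry_nonneg hQ t y z))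
    _ = p z := stat_pow hstat t z

lemma nuA_x0 (t : ℕ) : nuA Q x0 p t x0 = 0 :=
  Finset.sum_eq_zero fun y hy => by
    rw [kpow_col t y (Finset.mem_erase.mp hy).1, mul_zero]

lemma nuA_add (a b : ℕ) (w : Fin m) :
    nuA Q x0 p (a + b) w
      = ∑ v ∈ Finset.univ.erase x0, nuA Q x0 p a v * ((killed Q x0) ^ b) v w := by
  have h1 : nuA Q x0 p (a + b) w = ∑ v, nuA Q x0 p a v * ((killed Q x0) ^ b) v w := by
    unfold nuA
    rw [pow_add]
    simp only [Matrix.mul_apply, Finset.mul_sum]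
    rw [Finset.sum_comm]
    refine Finset.sum_congr rfl fun v _ => ?_
    rw [Finset.sum_mul]
    exact Finset.sum_congr rfl fun y _ => (mul_assoc _ _ _).symm
  rw [h1, ← Finset.sum_erase_add Finset.univ _ (Finset.mem_univ x0), nuA_x0,
    zero_mul, add_zero]

lemma noHit_succ (hQrow : ∀ y, ∑ z, Q y z = 1) (u : ℕ) :
    noHit Q x0 p (u + 1)
      = noHit Q x0 p u - ∑ w ∈ Finset.univ.erase x0, nuA Q x0 p u w * Q w x0 := by
  rw [noHit_eq_nu, noHit_eq_nu]
  calc ∑ z ∈ Finset.univ.erase x0, nuA Q x0 p (u + 1) z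
      = ∑ z ∈ Finset.univ.erase x0, ∑ v ∈ Finset.univ.erase x0,
          nuA Q x0 p u v * killed Q x0 v z := by
        refine Finset.sum_congr rfl fun z _ => ?_
        rw [nuA_add u 1 z, ]
        simp [pow_one]
    _ = ∑ v ∈ Finset.univ.erase x0, ∑ z ∈ Finset.univ.erase x0,
          nuA Q x0 p u v * killed Q x0 v z := Finset.sum_comm
    _ = ∑ v ∈ Finset.univ.erase x0, nuA Q x0 p u v * (1 - Q v x0) := by
        refine Finset.sum_congr rfl fun v hv => ?_
        rw [← Finset.mul_sum]
        congr 1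
        have hv' : v ≠ x0 := (Finset.mem_erase.mp hv).1
        have e : ∑ z ∈ Finset.univ.erase x0, killed Q x0 v z
            = ∑ z ∈ Finset.univ.erase x0, Q v z :=
          Finset.sum_congr rfl fun z hz => killed_eq v z hv' (Finset.mem_erase.mp hz).1
        have e2 : (∑ z ∈ Finset.univ.erase x0, Q v z) + Q v x0 = 1 := by
          rw [Finset.sum_erase_add Finset.univ _ (Finset.mem_univ x0)]
          exact hQrow v
        rw [e]; linarith
    _ = (∑ v ∈ Finset.univ.erase x0, nuA Q x0 p u v)
          - ∑ v ∈ Finset.univ.erase x0, nuA Q x0 p u v * Q v x0 := by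
        rw [← Finset.sum_sub_distrib]
        exact Finset.sum_congr rfl fun v _ => by ring

end Aux2

theorem slow_decay_over_mixing_window
    (P : (n : ℕ) → Matrix (Fin n) (Fin n) ℝ)
    (pi : (n : ℕ) → Fin n → ℝ)
    (x : (n : ℕ) → Fin n)
    (T : ℕ → ℕ) (c : ℝ)
    (hc : 2 < c)
    (hT : Filter.Tendsto T Filter.atTop Filter.atTop)
    (hnn : ∀ n : ℕ, 2 ≤ n → ∀ y z : Fin n, 0 ≤ P n y z)
    (hrow : ∀ n : ℕ, 2 ≤ n → ∀ y : Fin n, ∑ z, P n y z = 1)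
    (hirr : ∀ n : ℕ, 2 ≤ n → ∀ y z : Fin n, ∃ t : ℕ, 0 < (P n ^ t) y z)
    (hpinn : ∀ n : ℕ, 2 ≤ n → ∀ y : Fin n, 0 ≤ pi n y)
    (hpisum : ∀ n : ℕ, 2 ≤ n → ∑ y, pi n y = 1)
    (hpistat : ∀ n : ℕ, 2 ≤ n → Matrix.vecMul (pi n) (P n) = pi n)
    (hpiuniq : ∀ n : ℕ, 2 ≤ n → ∀ rho : Fin n → ℝ, (∀ y, 0 ≤ rho y) →
      (∑ y, rho y = 1) → Matrix.vecMul rho (P n) = rho → rho = pi n)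
    (hkirr : ∀ n : ℕ, 2 ≤ n → ∀ y z : Fin n, y ≠ x n → z ≠ x n →
      ∃ t : ℕ, 0 < ((killed (P n) (x n)) ^ t) y z)
    (HP1 : ∀ ε : ℝ, 0 < ε → ∃ N : ℕ, ∀ n : ℕ, N ≤ n → ∀ y z : Fin n,
      (n : ℝ) ^ c * |(P n ^ T n) y z - pi n z| < ε)
    (HP2 : ∀ ε : ℝ, 0 < ε → ∃ N : ℕ, ∀ n : ℕ, N ≤ n → ∀ y : Fin n,
      (T n : ℝ) * pi n y < ε)
    (HP3 : ∀ M : ℝ, ∃ N : ℕ, ∀ n : ℕ, N ≤ n → ∀ y : Fin n,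
      M < (n : ℝ) ^ 2 * pi n y)
    :
    ∀ ε : ℝ, 0 < ε → ∃ N : ℕ, ∀ n : ℕ, N ≤ n → ∀ t : ℕ,
      (1 - ε) * noHit (P n) (x n) (pi n) t ≤ noHit (P n) (x n) (pi n) (t + T n) := by
  intro ε hε
  obtain ⟨N1, hN1⟩ := HP1 (1/2) (by norm_num)
  obtain ⟨N2, hN2⟩ := HP2 (min (ε/3) (1/12)) (lt_min (by positivity) (by norm_num))
  obtain ⟨N3, hN3⟩ := HP3 1
  refine ⟨max (max N1 N2) (max N3 2), fun n hn => ?_⟩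
  have h2n : 2 ≤ n :=
    le_trans ((le_max_right N3 2).trans (le_max_right (max N1 N2) (max N3 2))) hn
  have hn1 : N1 ≤ n := le_trans ((le_max_left N1 N2).trans (le_max_left _ _)) hn
  have hn2 : N2 ≤ n := le_trans ((le_max_right N1 N2).trans (le_max_left _ _)) hn
  have hn3 : N3 ≤ n := le_trans ((le_max_left N3 2).trans (le_max_right _ _)) hn
  have hPnn : ∀ y z, 0 ≤ P n y z := hnn n h2n
  have hProw : ∀ y, ∑ z, P n y z = 1 := hrow n h2n
  have hpn : ∀ y, 0 ≤ pi n y := hpinn n h2n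
  have hstat1 : ∀ w, ∑ y, pi n y * P n y w = pi n w := by
    intro w
    have h := congrFun (hpistat n h2n) w
    simpa [Matrix.vecMul, dotProduct] using h
  -- abbreviations
  set nh : ℕ → ℝ := noHit (P n) (x n) (pi n) with hnhdef
  set Hs : ℕ → ℝ :=
    fun u => ∑ w ∈ Finset.univ.erase (x n), nuA (P n) (x n) (pi n) u w * P n w (x n)
    with hHsdef
  -- basic facts
  have hnhnn : ∀ u, 0 ≤ nh u := by
    intro u
    rw [hnhdef, noHit_eq_nu]
    exact Finset.sum_nonneg fun z _ => nuA_nonneg hPnn hpn u z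
  have hHnn : ∀ u, 0 ≤ Hs u := by
    intro u
    rw [hHsdef]
    exact Finset.sum_nonneg fun w _ =>
      mul_nonneg (nuA_nonneg hPnn hpn u w) (hPnn w (x n))
  have hdec : ∀ u, nh (u + 1) = nh u - Hs u := fun u => noHit_succ hProw u
  have hmono : ∀ u s, nh (u + s) ≤ nh u := by
    intro u s
    induction s with
    | zero => exact le_of_eq rfl
    | succ s ih =>
      have := hdec (u + s)
      have h2 := hHnn (u + s)
      calc nh (u + (s+1)) = nh ((u + s) + 1) := by ring_nf
        _ ≤ nh (u + s) := by rw [hdec (u+s)]; linarith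
        _ ≤ nh u := ih
  have hHle : ∀ u, Hs u ≤ pi n (x n) := by
    intro u
    rw [hHsdef]
    calc ∑ w ∈ Finset.univ.erase (x n), nuA (P n) (x n) (pi n) u w * P n w (x n)
        ≤ ∑ w ∈ Finset.univ.erase (x n), pi n w * P n w (x n) :=
          Finset.sum_le_sum fun w _ =>
            mul_le_mul_of_nonneg_right (nuA_le hPnn hpn hstat1 u w) (hPnn w (x n))
      _ ≤ ∑ w, pi n w * P n w (x n) :=
          Finset.sum_le_sum_of_subset_of_nonneg (Finset.subset_univ _)
            (fun w _ _ => mul_nonneg (hpn w) (hPnn w (x n)))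
      _ = pi n (x n) := hstat1 (x n)
  have hsumdec : ∀ t m, nh (t + m) = nh t - ∑ s ∈ Finset.range m, Hs (t + s) := by
    intro t m
    induction m with
    | zero => simp
    | succ m ih =>
      have e : t + (m + 1) = (t + m) + 1 := by ring
      rw [e, hdec (t + m), ih, Finset.sum_range_succ]
      ring
  have hnh0 : nh 0 = 1 - pi n (x n) := by
    rw [hnhdef, noHit_eq_nu]
    have e : ∀ z ∈ Finset.univ.erase (x n), nuA (P n) (x n) (pi n) 0 z = pi n z := by
      intro z hz
      unfold nuA
      rw [pow_zero]
      calc ∑ y ∈ Finset.univ.erase (x n), pi n y * (1 : Matrix (Fin n) (Fin n) ℝ) y z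
          = ∑ y ∈ Finset.univ.erase (x n), (if y = z then pi n y else 0) := by
            refine Finset.sum_congr rfl fun y _ => ?_
            by_cases h : y = z <;> simp [Matrix.one_apply, h]
        _ = pi n z := by rw [Finset.sum_ite_eq' (Finset.univ.erase (x n)) z (pi n)]; simp [hz]
    rw [Finset.sum_congr rfl e]
    have := Finset.sum_erase_add Finset.univ (pi n) (Finset.mem_univ (x n))
    rw [hpisum n h2n] at this
    linarith
  have hlow : ∀ u : ℕ, 1 - ((u : ℝ) + 1) * pi n (x n) ≤ nh u := by
    intro u
    induction u with
    | zero => rw [hnh0]; push_cast; linarith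
    | succ u ih =>
      have h := hdec u
      have h2 := hHle u
      rw [h]
      push_cast
      push_cast at ih
      linarith
  -- mixing estimates
  have hnR : (2 : ℝ) ≤ (n : ℝ) := by exact_mod_cast h2n
  have hn1R : (1 : ℝ) ≤ (n : ℝ) := by linarith
  have hn2pos : (0 : ℝ) < (n : ℝ) ^ 2 := by positivity
  have hc2 : ((n : ℝ)) ^ (2 : ℕ) ≤ (n : ℝ) ^ c := by
    rw [← Real.rpow_natCast (n : ℝ) 2]
    exact Real.rpow_le_rpow_of_exponent_le hn1R (by push_cast; linarith)
  have hpix : 1 < (n : ℝ) ^ 2 * pi n (x n) := hN3 n hn3 (x n)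
  have hpixpos : 0 < pi n (x n) := by nlinarith
  have hd : ∀ y : Fin n, |(P n ^ T n) y (x n) - pi n (x n)| ≤ pi n (x n) / 2 := by
    intro y
    have h1 := hN1 n hn1 y (x n)
    have h2 : (n : ℝ) ^ (2 : ℕ) * |(P n ^ T n) y (x n) - pi n (x n)|
        ≤ (n : ℝ) ^ c * |(P n ^ T n) y (x n) - pi n (x n)| :=
      mul_le_mul_of_nonneg_right hc2 (abs_nonneg _)
    nlinarith [abs_nonneg ((P n ^ T n) y (x n) - pi n (x n))]
  have hb : ∀ v, (P n ^ (T n + 1)) v (x n) ≤ 3/2 * pi n (x n) := by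
    intro v
    have e : (P n ^ (T n + 1)) v (x n) = ∑ w, P n v w * (P n ^ T n) w (x n) := by
      rw [pow_succ', Matrix.mul_apply]
    rw [e]
    calc ∑ w, P n v w * (P n ^ T n) w (x n)
        ≤ ∑ w, P n v w * (3/2 * pi n (x n)) := by
          refine Finset.sum_le_sum fun w _ => mul_le_mul_of_nonneg_left ?_ (hPnn v w)
          have h := abs_le.mp (hd w)
          linarith [h.2]
      _ = 3/2 * pi n (x n) := by rw [← Finset.sum_mul, hProw v, one_mul]
  have hinner : ∀ v, ∑ w ∈ Finset.univ.erase (x n),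
      ((killed (P n) (x n)) ^ (T n)) v w * P n w (x n) ≤ 3/2 * pi n (x n) := by
    intro v
    calc ∑ w ∈ Finset.univ.erase (x n), ((killed (P n) (x n)) ^ (T n)) v w * P n w (x n)
        ≤ ∑ w ∈ Finset.univ.erase (x n), (P n ^ T n) v w * P n w (x n) :=
          Finset.sum_le_sum fun w _ =>
            mul_le_mul_of_nonneg_right (kpow_le hPnn (T n) v w) (hPnn w (x n))
      _ ≤ ∑ w, (P n ^ T n) v w * P n w (x n) :=
          Finset.sum_le_sum_of_subset_of_nonneg (Finset.subset_univ _)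
            (fun w _ _ => mul_nonneg (pow_entry_nonneg hPnn _ v w) (hPnn w (x n)))
      _ = (P n ^ (T n + 1)) v (x n) := by rw [pow_succ, Matrix.mul_apply]
      _ ≤ 3/2 * pi n (x n) := hb v
  have hkey : ∀ a, Hs (a + T n) ≤ 3/2 * pi n (x n) * nh a := by
    intro a
    rw [hHsdef]
    calc ∑ w ∈ Finset.univ.erase (x n), nuA (P n) (x n) (pi n) (a + T n) w * P n w (x n)
        = ∑ w ∈ Finset.univ.erase (x n), ∑ v ∈ Finset.univ.erase (x n),
            nuA (P n) (x n) (pi n) a v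
              * (((killed (P n) (x n)) ^ (T n)) v w * P n w (x n)) := by
          refine Finset.sum_congr rfl fun w _ => ?_
          rw [nuA_add, Finset.sum_mul]
          exact Finset.sum_congr rfl fun v _ => mul_assoc _ _ _
      _ = ∑ v ∈ Finset.univ.erase (x n), ∑ w ∈ Finset.univ.erase (x n),
            nuA (P n) (x n) (pi n) a v
              * (((killed (P n) (x n)) ^ (T n)) v w * P n w (x n)) := Finset.sum_comm
      _ = ∑ v ∈ Finset.univ.erase (x n), nuA (P n) (x n) (pi n) a v
            * (∑ w ∈ Finset.univ.erase (x n),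
                ((killed (P n) (x n)) ^ (T n)) v w * P n w (x n)) := by
          refine Finset.sum_congr rfl fun v _ => ?_
          rw [Finset.mul_sum]
      _ ≤ ∑ v ∈ Finset.univ.erase (x n), nuA (P n) (x n) (pi n) a v
            * (3/2 * pi n (x n)) :=
          Finset.sum_le_sum fun v _ =>
            mul_le_mul_of_nonneg_left (hinner v) (nuA_nonneg hPnn hpn a v)
      _ = 3/2 * pi n (x n) * nh a := by
          rw [← Finset.sum_mul, hnhdef, noHit_eq_nu]; ring
  -- HP2 numbers
  have hTpi : (T n : ℝ) * pi n (x n) < min (ε/3) (1/12) := hN2 n hn2 (x n)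
  have hTpi1 : (T n : ℝ) * pi n (x n) < ε/3 := lt_of_lt_of_le hTpi (min_le_left _ _)
  have hTpi2 : (T n : ℝ) * pi n (x n) < 1/12 := lt_of_lt_of_le hTpi (min_le_right _ _)
  have hTpinn : 0 ≤ (T n : ℝ) * pi n (x n) :=
    mul_nonneg (Nat.cast_nonneg _) (hpn (x n))
  intro t
  rcases Nat.eq_zero_or_pos (T n) with hT0 | hT1
  · rw [hT0, add_zero]
    have := mul_nonneg (le_of_lt hε) (hnhnn t)
    nlinarith [hnhnn t]
  · have key : ∀ u, nh u - nh (u + T n) ≤ 3 * ((T n : ℝ) * pi n (x n)) * nh u := by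
      intro u
      induction u using Nat.strong_induction_on with
      | _ u IH =>
        rcases lt_or_ge u (T n) with hlt | hge
        · rw [hsumdec u (T n)]
          have h2 : ∑ s ∈ Finset.range (T n), Hs (u + s)
              ≤ ∑ s ∈ Finset.range (T n), pi n (x n) :=
            Finset.sum_le_sum fun s _ => hHle (u + s)
          have h3 : (∑ s ∈ Finset.range (T n), pi n (x n))
              = (T n : ℝ) * pi n (x n) := by
            rw [Finset.sum_const, Finset.card_range, nsmul_eq_mul]
          have h5 : ((u : ℝ) + 1) ≤ (T n : ℝ) := by exact_mod_cast hlt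
          have h4 : 1 - (T n : ℝ) * pi n (x n) ≤ nh u := by
            have hl := hlow u
            have h6 := mul_le_mul_of_nonneg_right h5 (hpn (x n))
            linarith
          have h6 : (11 : ℝ)/12 ≤ nh u := by linarith
          have p1 : 3 * ((T n : ℝ) * pi n (x n)) * (11/12)
              ≤ 3 * ((T n : ℝ) * pi n (x n)) * nh u :=
            mul_le_mul_of_nonneg_left h6 (by linarith)
          linarith
        · obtain ⟨a, rfl⟩ : ∃ a, u = a + T n := ⟨u - T n, (Nat.sub_add_cancel hge).symm⟩
          have IHa := IH a (by omega)
          have h2a : nh a ≤ 2 * nh (a + T n) := by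
            have p2 : 0 ≤ (1/12 - (T n : ℝ) * pi n (x n)) * nh a :=
              mul_nonneg (by linarith) (hnhnn a)
            have p2' : 0 ≤ ((T n : ℝ) * pi n (x n)) * nh a :=
              mul_nonneg hTpinn (hnhnn a)
            nlinarith [IHa, hnhnn (a + T n)]
          rw [hsumdec (a + T n) (T n)]
          have h2 : ∀ s ∈ Finset.range (T n),
              Hs ((a + T n) + s) ≤ 3 * pi n (x n) * nh (a + T n) := by
            intro s _
            have e : (a + T n) + s = (a + s) + T n := by ring
            rw [e]
            refine le_trans (hkey (a + s)) ?_
            have m1 : nh (a + s) ≤ nh a := hmono a s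
            have q1 : 0 ≤ pi n (x n) * (nh a - nh (a + s)) :=
              mul_nonneg (hpn (x n)) (by linarith)
            have q2 : 0 ≤ pi n (x n) * (2 * nh (a + T n) - nh a) :=
              mul_nonneg (hpn (x n)) (by linarith)
            linarith
          have h3 : ∑ s ∈ Finset.range (T n), Hs ((a + T n) + s)
              ≤ (T n : ℝ) * (3 * pi n (x n) * nh (a + T n)) := by
            calc ∑ s ∈ Finset.range (T n), Hs ((a + T n) + s)
                ≤ ∑ _s ∈ Finset.range (T n), 3 * pi n (x n) * nh (a + T n) :=
                  Finset.sum_le_sum h2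
              _ = (T n : ℝ) * (3 * pi n (x n) * nh (a + T n)) := by
                  rw [Finset.sum_const, Finset.card_range, nsmul_eq_mul]
          linarith [h3]
    have hk := key t
    have p3 : 0 ≤ (ε/3 - (T n : ℝ) * pi n (x n)) * nh t :=
      mul_nonneg (by linarith) (hnhnn t)
    linarith
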